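/- For all t > 0, 2t(2 + cosh(2t)) - 3·sinh(2t) > 0. Consequently, the function H(t) = (n-1)coth²(t) - (1/sinh²(t))·(2 + (n-3)·t·coth(t)) is strictly increasing on (0,∞) for n ≥ 4 and strictly decreasing on (0,∞) for n = 2. -/

import Mathlib

open Real Set

private lemma aux_sinh_lt (x : ℝ) (hx : 0 < x) : Real.sinh x < x * Real.cosh x := by
  have h : StrictMonoOn (fun y : ℝ => y * Real.cosh y - Real.sinh y) (Set.Ici 0) := by
    apply strictMonoOn_of_deriv_pos (convex_Ici 0)
    · fun_prop
    · intro y hy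
      rw [interior_Ici] at hy
      have hd : HasDerivAt (fun y : ℝ => y * Real.cosh y - Real.sinh y) (y * Real.sinh y) y := by
        have := ((hasDerivAt_id y).mul (Real.hasDerivAt_cosh y)).sub (Real.hasDerivAt_sinh y)
        simp only [id_eq] at this; refine this.congr_deriv ?_; ring
      rw [hd.deriv]
      exact mul_pos hy (Real.sinh_pos_iff.2 hy)
  have := h (Set.self_mem_Ici) (Set.mem_Ici.2 hx.le) hx
  simp at this
  linarith

private lemma aux2 (t : ℝ) (ht : 0 < t) :
    0 < 4 + 4 * t * Real.sinh (2 * t) - 4 * Real.cosh (2 * t) := by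
  have h : StrictMonoOn (fun y : ℝ => 4 + 4 * y * Real.sinh (2 * y) - 4 * Real.cosh (2 * y)) (Set.Ici 0) := by
    apply strictMonoOn_of_deriv_pos (convex_Ici 0)
    · fun_prop
    · intro y hy
      rw [interior_Ici] at hy
      have h2 : HasDerivAt (fun y : ℝ => 2 * y) 2 y := by
        simpa using (hasDerivAt_id y).const_mul 2
      have hd : HasDerivAt (fun y : ℝ => 4 + 4 * y * Real.sinh (2 * y) - 4 * Real.cosh (2 * y))
          (4 * Real.sinh (2 * y) + 4 * y * (Real.cosh (2 * y) * 2) - 4 * (Real.sinh (2 * y) * 2)) y := by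
        have := ((hasDerivAt_const y (4:ℝ)).add
            ((((hasDerivAt_id y).const_mul 4).mul (h2.sinh)))).sub ((h2.cosh).const_mul 4)
        simp only [id_eq] at this; refine this.congr_deriv ?_; ring
      rw [hd.deriv]
      have hy' : 0 < y := hy
      have := aux_sinh_lt (2 * y) (by linarith)
      nlinarith [Real.cosh_pos (2*y)]
  have := h (Set.self_mem_Ici) (Set.mem_Ici.2 ht.le) ht
  simp [Real.cosh_zero] at this
  linarith [this]

private lemma aux3 (t : ℝ) (ht : 0 < t) :
    0 < 2 * t * (2 + Real.cosh (2 * t)) - 3 * Real.sinh (2 * t) := by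
  have h : StrictMonoOn (fun y : ℝ => 2 * y * (2 + Real.cosh (2 * y)) - 3 * Real.sinh (2 * y)) (Set.Ici 0) := by
    apply strictMonoOn_of_deriv_pos (convex_Ici 0)
    · fun_prop
    · intro y hy
      rw [interior_Ici] at hy
      have h2 : HasDerivAt (fun y : ℝ => 2 * y) 2 y := by
        simpa using (hasDerivAt_id y).const_mul 2
      have hd : HasDerivAt (fun y : ℝ => 2 * y * (2 + Real.cosh (2 * y)) - 3 * Real.sinh (2 * y))
          (2 * (2 + Real.cosh (2 * y)) + 2 * y * (Real.sinh (2 * y) * 2) - 3 * (Real.cosh (2 * y) * 2)) y := by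
        have := (h2.mul ((hasDerivAt_const y (2:ℝ)).add (h2.cosh))).sub ((h2.sinh).const_mul 3)
        simp only [Pi.add_apply] at this; refine this.congr_deriv ?_; ring
      rw [hd.deriv]
      have := aux2 y hy
      linarith
  have := h (Set.self_mem_Ici) (Set.mem_Ici.2 ht.le) ht
  simp at this
  linarith

theorem hyperbolic_H_monotonicity (n : ℕ)
    (H : ℝ → ℝ)
    (hH : ∀ t : ℝ, H t = ((n : ℝ) - 1) * (Real.cosh t / Real.sinh t) ^ 2
      - (1 / Real.sinh t ^ 2) * (2 + ((n : ℝ) - 3) * t * (Real.cosh t / Real.sinh t))) :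
    (∀ t : ℝ, 0 < t → 0 < 2 * t * (2 + Real.cosh (2 * t)) - 3 * Real.sinh (2 * t)) ∧
    (4 ≤ n → StrictMonoOn H (Set.Ioi (0 : ℝ))) ∧
    (n = 2 → StrictAntiOn H (Set.Ioi (0 : ℝ))) := by
  have hHfun : H = fun t => ((n : ℝ) - 1) * (Real.cosh t / Real.sinh t) ^ 2
      - (1 / Real.sinh t ^ 2) * (2 + ((n : ℝ) - 3) * t * (Real.cosh t / Real.sinh t)) :=
    funext hH
  have hderiv : ∀ t : ℝ, 0 < t → HasDerivAt H
      (((n : ℝ) - 3) * (2 * t * (2 + Real.cosh (2 * t)) - 3 * Real.sinh (2 * t))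
        / (2 * Real.sinh t ^ 4)) t := by
    intro t ht
    have hs : Real.sinh t ≠ 0 := ne_of_gt (Real.sinh_pos_iff.2 ht)
    have hc := Real.hasDerivAt_cosh t
    have hsd := Real.hasDerivAt_sinh t
    have hq : HasDerivAt (fun t => Real.cosh t / Real.sinh t)
        ((Real.sinh t * Real.sinh t - Real.cosh t * Real.cosh t) / Real.sinh t ^ 2) t :=
      hc.div hsd hs
    have h1 : HasDerivAt (fun t => ((n : ℝ) - 1) * (Real.cosh t / Real.sinh t) ^ 2)
        (((n : ℝ) - 1) * (2 * (Real.cosh t / Real.sinh t) *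
          ((Real.sinh t * Real.sinh t - Real.cosh t * Real.cosh t) / Real.sinh t ^ 2))) t := by
      have := ((hq.pow 2).const_mul ((n : ℝ) - 1))
      refine this.congr_deriv ?_
      ring
    have hinv : HasDerivAt (fun t => 1 / Real.sinh t ^ 2)
        (-(2 * Real.sinh t * Real.cosh t) / (Real.sinh t ^ 2) ^ 2) t := by
      have h0 : HasDerivAt (fun t => Real.sinh t ^ 2) (2 * Real.sinh t * Real.cosh t) t := by
        have := hsd.pow 2
        refine this.congr_deriv ?_; ring
      have := ((hasDerivAt_const t (1:ℝ)).div h0 (pow_ne_zero 2 hs))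
      refine this.congr_deriv ?_
      ring
    have h3 : HasDerivAt (fun t => 2 + ((n : ℝ) - 3) * t * (Real.cosh t / Real.sinh t))
        (((n : ℝ) - 3) * (Real.cosh t / Real.sinh t) + ((n : ℝ) - 3) * t *
          ((Real.sinh t * Real.sinh t - Real.cosh t * Real.cosh t) / Real.sinh t ^ 2)) t := by
      have := (hasDerivAt_const t (2:ℝ)).add
        ((((hasDerivAt_id t).const_mul ((n : ℝ) - 3)).mul hq))
      simp only [id_eq] at this
      refine this.congr_deriv ?_
      ring
    have h4 := h1.sub (hinv.mul h3)
    rw [hHfun]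
    refine h4.congr_deriv ?_
    have hcs : Real.cosh t ^ 2 = Real.sinh t ^ 2 + 1 := Real.cosh_sq t
    rw [Real.cosh_two_mul, Real.sinh_two_mul]
    field_simp
    ring_nf
    linear_combination (-2*(n:ℝ)*Real.cosh t*Real.sinh t + 2*(n:ℝ)*t + 2*Real.cosh t*Real.sinh t - 6*t) * hcs
  have hcont : ContinuousOn H (Set.Ioi (0:ℝ)) := fun t ht =>
    ((hderiv t ht).differentiableAt.continuousAt).continuousWithinAt
  refine ⟨aux3, ?_, ?_⟩
  · intro hn
    apply strictMonoOn_of_deriv_pos (convex_Ioi 0) hcont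
    intro t ht
    rw [interior_Ioi] at ht
    rw [(hderiv t ht).deriv]
    have h1 := aux3 t ht
    have hsp := Real.sinh_pos_iff.2 ht
    have hn3 : (0:ℝ) < (n:ℝ) - 3 := by
      have : (4:ℝ) ≤ (n:ℝ) := by exact_mod_cast hn
      linarith
    positivity
  · intro hn
    subst hn
    apply strictAntiOn_of_deriv_neg (convex_Ioi 0) hcont
    intro t ht
    rw [interior_Ioi] at ht
    rw [(hderiv t ht).deriv]
    have h1 := aux3 t ht
    have hsp := Real.sinh_pos_iff.2 ht
    have : ((2:ℕ):ℝ) - 3 = -1 := by norm_num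
    rw [this]
    have : 0 < 2 * Real.sinh t ^ 4 := by positivity
    exact div_neg_of_neg_of_pos (by linarith) this
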